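/- If a cutoff vector p satisfies the admissions-market equilibrium conditions (D_c(p) ≤ q_c for all schools c, and D_c(p) = q_c whenever p_c > 0), and every student prefers any school to nonassignment, then the total measure of assigned students equals min{1, Σ_c q_c}. -/
import Mathlib


/-- Equilibrium cutoffs clear the market: if demand satisfies the capacity and
stability conditions, the total measure of assigned students is `min 1 (∑ q)`. -/
theorem market_clearing {C : Type*} [Fintype C] [Nonempty C]
    (D q p : C → ℝ)
    (hq : ∀ c, 0 < q c)
    (hp : ∀ c, p c ∈ Set.Icc (0 : ℝ) 1)
    (hDnonneg : ∀ c, 0 ≤ D c)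
    -- total assigned mass is at most the full population
    (htot : ∑ c, D c ≤ 1)
    -- if some school has cutoff zero, every student is assigned
    (hzero : (∃ c, p c = 0) → ∑ c, D c = 1)
    -- capacity condition
    (hcap : ∀ c, D c ≤ q c)
    -- stability condition
    (hstab : ∀ c, 0 < p c → D c = q c) :
    ∑ c, D c = min 1 (∑ c, q c) := by
  by_cases h : ∃ c, p c = 0
  · have h1 : ∑ c, D c = 1 := hzero h
    have hle : (1:ℝ) ≤ ∑ c, q c := h1 ▸ Finset.sum_le_sum fun c _ => hcap c
    rw [h1, min_eq_left hle]
  · push_neg at h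
    have hall : ∀ c, D c = q c := fun c =>
      hstab c (lt_of_le_of_ne (hp c).1 (Ne.symm (h c)))
    have hsum : ∑ c, D c = ∑ c, q c := Finset.sum_congr rfl fun c _ => hall c
    rw [hsum, min_eq_right (hsum ▸ htot)]
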